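/- For any complex matrices ρ and σ acting on ℂ^{d_S} ⊗ ℂ^{d_B}, the trace distance does not increase under partial trace: ‖Tr_B ρ − Tr_B σ‖₁ ≤ ‖ρ − σ‖₁. -/

import Mathlib

open scoped ComplexOrder

noncomputable section

/-- The trace norm of a complex square matrix: the sum of its singular values,
equal to the trace of `√(Xᴴ X)`. -/
def traceNorm {n : Type*} [Fintype n] [DecidableEq n] (X : Matrix n n ℂ) : ℝ :=
  ((((Matrix.posSemidef_conjTranspose_mul_self X).1.eigenvectorUnitary : Matrix n n ℂ) *
      Matrix.diagonal (((↑) : ℝ → ℂ) ∘ Real.sqrt ∘ (Matrix.posSemidef_conjTranspose_mul_self X).1.eigenvalues) *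
      (star (Matrix.posSemidef_conjTranspose_mul_self X).1.eigenvectorUnitary : Matrix n n ℂ)).trace).re

/-- The operator norm (largest singular value) of a complex square matrix. -/
def opNorm {n : Type*} [Fintype n] [DecidableEq n] (X : Matrix n n ℂ) : ℝ :=
  ‖Matrix.toEuclideanCLM (𝕜 := ℂ) X‖
/-- The partial trace over the second (bath) tensor factor. -/
def ptraceB {dS dB : Type*} [Fintype dB] (M : Matrix (dS × dB) (dS × dB) ℂ) :
    Matrix dS dS ℂ :=
  Matrix.of fun i j => ∑ b, M (i, b) (j, b)

section Aux

set_option maxHeartbeats 1000000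
set_option synthInstance.maxHeartbeats 1000000

open Matrix

variable {n : Type*} [Fintype n] [DecidableEq n]

private def psdSqrt (X : Matrix n n ℂ) : Matrix n n ℂ :=
  ((Matrix.posSemidef_conjTranspose_mul_self X).1.eigenvectorUnitary : Matrix n n ℂ) *
      Matrix.diagonal (((↑) : ℝ → ℂ) ∘ Real.sqrt ∘ (Matrix.posSemidef_conjTranspose_mul_self X).1.eigenvalues) *
      (star (Matrix.posSemidef_conjTranspose_mul_self X).1.eigenvectorUnitary : Matrix n n ℂ)

private lemma traceNorm_eq (X : Matrix n n ℂ) : traceNorm X = ((psdSqrt X).trace).re := rfl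

private lemma spectral' {A : Matrix n n ℂ} (hA : A.IsHermitian) :
    A = (hA.eigenvectorUnitary : Matrix n n ℂ) * diagonal (RCLike.ofReal ∘ hA.eigenvalues) *
      star (hA.eigenvectorUnitary : Matrix n n ℂ) := by
  have := hA.spectral_theorem
  rwa [Unitary.conjStarAlgAut_apply] at this

private lemma star_mul_self_mul_eq_diag' {A : Matrix n n ℂ} (hA : A.IsHermitian) :
    star (hA.eigenvectorUnitary : Matrix n n ℂ) * A * (hA.eigenvectorUnitary : Matrix n n ℂ)
      = diagonal (RCLike.ofReal ∘ hA.eigenvalues) := by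
  have := hA.conjStarAlgAut_star_eigenvectorUnitary
  rwa [Unitary.conjStarAlgAut_apply, Unitary.coe_star, star_star] at this

private lemma psdSqrt_posSemidef (X : Matrix n n ℂ) : (psdSqrt X).PosSemidef := by
  have := (Matrix.posSemidef_diagonal_iff.mpr (fun i => Complex.zero_le_real.mpr
    (Real.sqrt_nonneg ((Matrix.posSemidef_conjTranspose_mul_self X).1.eigenvalues i)))).mul_mul_conjTranspose_same
    ((Matrix.posSemidef_conjTranspose_mul_self X).1.eigenvectorUnitary : Matrix n n ℂ)
  exact this

private lemma psdSqrt_mul_self (X : Matrix n n ℂ) : psdSqrt X * psdSqrt X = Xᴴ * X := by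
  have hX := Matrix.posSemidef_conjTranspose_mul_self X
  have hU : star (hX.1.eigenvectorUnitary : Matrix n n ℂ) * hX.1.eigenvectorUnitary = 1 :=
    (Matrix.mem_unitaryGroup_iff').mp hX.1.eigenvectorUnitary.2
  have hD : diagonal (((↑) : ℝ → ℂ) ∘ Real.sqrt ∘ hX.1.eigenvalues) *
      diagonal (((↑) : ℝ → ℂ) ∘ Real.sqrt ∘ hX.1.eigenvalues)
      = diagonal (RCLike.ofReal ∘ hX.1.eigenvalues) := by
    rw [diagonal_mul_diagonal]
    congr 1; funext i
    simp only [Function.comp_apply]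
    rw [← Complex.ofReal_mul, Real.mul_self_sqrt (hX.eigenvalues_nonneg i)]
    rfl
  calc psdSqrt X * psdSqrt X
      = (hX.1.eigenvectorUnitary : Matrix n n ℂ) * (diagonal (((↑) : ℝ → ℂ) ∘ Real.sqrt ∘ hX.1.eigenvalues) *
      diagonal (((↑) : ℝ → ℂ) ∘ Real.sqrt ∘ hX.1.eigenvalues)) * star (hX.1.eigenvectorUnitary : Matrix n n ℂ) := by
        simp only [psdSqrt, Unitary.coe_star, Matrix.mul_assoc]
        rw [← Matrix.mul_assoc (star _) _ (_ * _), hU, Matrix.one_mul]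
    _ = Xᴴ * X := by rw [hD]; exact (spectral' hX.1).symm

private lemma diag_conj (V M : Matrix n n ℂ) (j : n) :
    (star V * M * V) j j = star (fun k => V k j) ⬝ᵥ (M *ᵥ fun k => V k j) := by
  simp only [Matrix.mul_apply, mulVec, dotProduct, star_apply, Pi.star_apply, Finset.mul_sum,
    Finset.sum_mul]
  rw [Finset.sum_comm]
  congr 1; ext k; congr 1; ext l; ring

private lemma dot_self_re (x : EuclideanSpace ℂ n) :
    (star (x : n → ℂ) ⬝ᵥ (x : n → ℂ)).re = ‖x‖ ^ 2 := by
  rw [norm_sq_eq_re_inner (𝕜 := ℂ), EuclideanSpace.inner_eq_star_dotProduct]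
  simp only [RCLike.re_to_complex]
  rw [dotProduct_comm _ (star _)]

private lemma norm_clm_sq (M : Matrix n n ℂ) (x : EuclideanSpace ℂ n) :
    ‖(Matrix.toEuclideanCLM (𝕜 := ℂ) M) x‖ ^ 2
      = (star (x : n → ℂ) ⬝ᵥ ((Mᴴ * M) *ᵥ (x : n → ℂ))).re := by
  rw [norm_sq_eq_re_inner (𝕜 := ℂ), EuclideanSpace.inner_eq_star_dotProduct, dotProduct_comm _ (star _)]
  show (RCLike.re (star (M *ᵥ (x : n → ℂ)) ⬝ᵥ (M *ᵥ (x : n → ℂ))) : ℝ) = _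
  rw [Matrix.star_mulVec, ← Matrix.dotProduct_mulVec, Matrix.mulVec_mulVec]
  simp [RCLike.re_to_complex]

private lemma opNorm_conjTranspose (A : Matrix n n ℂ) : opNorm Aᴴ = opNorm A := by
  rw [opNorm, opNorm, ← Matrix.star_eq_conjTranspose, map_star,
    ContinuousLinearMap.star_eq_adjoint]
  exact ContinuousLinearMap.adjoint.norm_map _

private lemma traceNorm_nonneg (X : Matrix n n ℂ) : 0 ≤ traceNorm X := by
  have hP := psdSqrt_posSemidef X
  rw [traceNorm_eq, Matrix.trace, Complex.re_sum]
  apply Finset.sum_nonneg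
  intro i _
  have h := hP.dotProduct_mulVec_nonneg (Pi.single i 1)
  have e : star (Pi.single i 1 : n → ℂ) ⬝ᵥ
      (psdSqrt X *ᵥ Pi.single i 1)
        = psdSqrt X i i := by
    simp [dotProduct, Matrix.mulVec, Pi.single_apply, apply_ite, Finset.sum_ite_eq,
      mul_comm]
  rw [e] at h
  exact (Complex.le_def.mp h).1

private theorem trace_re_le (A X : Matrix n n ℂ) :
    ((A * X).trace).re ≤ opNorm A * traceNorm X := by
  have hX := Matrix.posSemidef_conjTranspose_mul_self X
  set P := psdSqrt X with hPdef
  have hP : P.PosSemidef := psdSqrt_posSemidef X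
  have hPP : P * P = Xᴴ * X := psdSqrt_mul_self X
  set hH := hP.1 with hHdef
  set V : Matrix n n ℂ := (hH.eigenvectorUnitary : Matrix n n ℂ) with hVdef
  have hVmem := hH.eigenvectorUnitary.2
  have hV1 : V * star V = 1 := (Matrix.mem_unitaryGroup_iff).mp hVmem
  set μ := hH.eigenvalues with hμdef
  have hμ0 : ∀ j, 0 ≤ μ j := fun j => hP.eigenvalues_nonneg j
  have hcol : ∀ j : n, (fun k => V k j) = ⇑(hH.eigenvectorBasis j) := by
    intro j; funext k; exact hH.eigenvectorUnitary_apply k j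
  have htn : traceNorm X = ∑ j, μ j := by
    have h1 : P.trace = (star V * P * V).trace := by
      rw [Matrix.trace_mul_cycle, hV1, one_mul]
    have h2 : star V * P * V = Matrix.diagonal (RCLike.ofReal ∘ μ) :=
      star_mul_self_mul_eq_diag' hH
    rw [traceNorm_eq]
    rw [show psdSqrt X = P from rfl, h1, h2,
      Matrix.trace_diagonal]
    rw [Complex.re_sum]
    simp [RCLike.ofReal]
  have hXv : ∀ j, ‖(Matrix.toEuclideanCLM (𝕜 := ℂ) X) (hH.eigenvectorBasis j)‖ = μ j := by
    intro j
    have hb : ‖hH.eigenvectorBasis j‖ = 1 := hH.eigenvectorBasis.orthonormal.1 j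
    set w : n → ℂ := ⇑(hH.eigenvectorBasis j) with hwdef
    have hPv2 : (Xᴴ * X) *ᵥ w = ((μ j : ℂ) * (μ j : ℂ)) • w := by
      rw [← hPP, ← Matrix.mulVec_mulVec, hH.mulVec_eigenvectorBasis, Matrix.mulVec_smul,
        hH.mulVec_eigenvectorBasis]
      funext k
      simp only [Pi.smul_apply, smul_smul, smul_eq_mul, Complex.real_smul]
      ring
    have hw1 : star w ⬝ᵥ w = 1 := by
      have h := EuclideanSpace.inner_eq_star_dotProduct (𝕜 := ℂ) (hH.eigenvectorBasis j)
        (hH.eigenvectorBasis j)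
      rw [inner_self_eq_norm_sq_to_K, hb, dotProduct_comm _ (star _)] at h
      rw [← h]; norm_num
    have h3 : inner (𝕜 := ℂ) ((Matrix.toEuclideanCLM (𝕜 := ℂ) X) (hH.eigenvectorBasis j))
        ((Matrix.toEuclideanCLM (𝕜 := ℂ) X) (hH.eigenvectorBasis j)) = ((μ j : ℂ)) ^ 2 := by
      rw [EuclideanSpace.inner_eq_star_dotProduct, dotProduct_comm _ (star _)]
      show star (X *ᵥ w) ⬝ᵥ (X *ᵥ w) = _
      rw [Matrix.star_mulVec, ← Matrix.dotProduct_mulVec, Matrix.mulVec_mulVec, hPv2,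
        dotProduct_smul, hw1]
      simp; ring
    have h2 : ‖(Matrix.toEuclideanCLM (𝕜 := ℂ) X) (hH.eigenvectorBasis j)‖ ^ 2 = μ j ^ 2 := by
      rw [norm_sq_eq_re_inner (𝕜 := ℂ), h3]
      simp [RCLike.re_to_complex, ← Complex.ofReal_pow]
    calc ‖(Matrix.toEuclideanCLM (𝕜 := ℂ) X) (hH.eigenvectorBasis j)‖
        = Real.sqrt (‖(Matrix.toEuclideanCLM (𝕜 := ℂ) X) (hH.eigenvectorBasis j)‖ ^ 2) :=
          (Real.sqrt_sq (norm_nonneg _)).symm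
      _ = Real.sqrt (μ j ^ 2) := by rw [h2]
      _ = μ j := Real.sqrt_sq (hμ0 j)
  have htr : (A * X).trace = ∑ j, inner (𝕜 := ℂ) (hH.eigenvectorBasis j)
      ((Matrix.toEuclideanCLM (𝕜 := ℂ) (A * X)) (hH.eigenvectorBasis j)) := by
    have h1 : (A * X).trace = (star V * (A * X) * V).trace := by
      rw [Matrix.trace_mul_cycle, hV1, one_mul]
    rw [h1, Matrix.trace]
    apply Finset.sum_congr rfl
    intro j _
    rw [Matrix.diag_apply, diag_conj, hcol j, EuclideanSpace.inner_eq_star_dotProduct, dotProduct_comm _ (star _)]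
    rfl
  rw [htr, Complex.re_sum, htn, Finset.mul_sum]
  apply Finset.sum_le_sum
  intro j _
  calc (inner (𝕜 := ℂ) (hH.eigenvectorBasis j)
      ((Matrix.toEuclideanCLM (𝕜 := ℂ) (A * X)) (hH.eigenvectorBasis j))).re
      ≤ ‖hH.eigenvectorBasis j‖ * ‖(Matrix.toEuclideanCLM (𝕜 := ℂ) (A * X)) (hH.eigenvectorBasis j)‖ := by
        have := re_inner_le_norm (𝕜 := ℂ) (hH.eigenvectorBasis j)
          ((Matrix.toEuclideanCLM (𝕜 := ℂ) (A * X)) (hH.eigenvectorBasis j))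
        simpa using this
    _ = ‖(Matrix.toEuclideanCLM (𝕜 := ℂ) A) ((Matrix.toEuclideanCLM (𝕜 := ℂ) X) (hH.eigenvectorBasis j))‖ := by
        rw [hH.eigenvectorBasis.orthonormal.1 j, one_mul, _root_.map_mul]; rfl
    _ ≤ opNorm A * ‖(Matrix.toEuclideanCLM (𝕜 := ℂ) X) (hH.eigenvectorBasis j)‖ :=
        (Matrix.toEuclideanCLM (𝕜 := ℂ) A).le_opNorm _
    _ = opNorm A * μ j := by rw [hXv j]

private theorem exists_dual (Y : Matrix n n ℂ) :
    ∃ A : Matrix n n ℂ, opNorm A ≤ 1 ∧ ((A * Y).trace).re = traceNorm Y := by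
  have hX := Matrix.posSemidef_conjTranspose_mul_self Y
  set P := psdSqrt Y with hPdef
  have hP : P.PosSemidef := psdSqrt_posSemidef Y
  have hPP : P * P = Yᴴ * Y := psdSqrt_mul_self Y
  set hH := hP.1 with hHdef
  set V : Matrix n n ℂ := (hH.eigenvectorUnitary : Matrix n n ℂ) with hVdef
  have hVmem := hH.eigenvectorUnitary.2
  have hV1 : V * star V = 1 := (Matrix.mem_unitaryGroup_iff).mp hVmem
  have hV2 : star V * V = 1 := (Matrix.mem_unitaryGroup_iff').mp hVmem
  have hcancel : ∀ M : Matrix n n ℂ, star V * (V * M) = M := fun M => by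
    rw [← Matrix.mul_assoc, hV2, Matrix.one_mul]
  set μ := hH.eigenvalues with hμdef
  have hμ0 : ∀ j, 0 ≤ μ j := fun j => hP.eigenvalues_nonneg j
  set D : Matrix n n ℂ := Matrix.diagonal (RCLike.ofReal ∘ μ) with hDdef
  have hspec : P = V * D * star V := spectral' hH
  have hYY : Yᴴ * Y = V * (D * (D * star V)) := by
    rw [← hPP, hspec]
    simp only [Matrix.mul_assoc]
    rw [hcancel]
  set e : n → ℂ := fun i => if μ i = 0 then 0 else ((μ i : ℂ))⁻¹ with hedef
  set E : Matrix n n ℂ := Matrix.diagonal e with hEdef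
  set A : Matrix n n ℂ := V * E * star V * Yᴴ with hAdef
  have htn : traceNorm Y = ∑ j, μ j := by
    have h1 : P.trace = (star V * P * V).trace := by
      rw [Matrix.trace_mul_cycle, hV1, one_mul]
    have h2 : star V * P * V = Matrix.diagonal (RCLike.ofReal ∘ μ) :=
      star_mul_self_mul_eq_diag' hH
    rw [traceNorm_eq, show psdSqrt Y = P from rfl, h1, h2,
      Matrix.trace_diagonal, Complex.re_sum]
    simp [RCLike.ofReal]
  refine ⟨A, ?_, ?_⟩
  · -- operator norm bound
    have hse : star e = e := by
      funext i
      simp only [Pi.star_apply, hedef]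
      by_cases h : μ i = 0 <;> simp [h, star_inv₀, Complex.star_def, Complex.conj_ofReal]
    have hAH : Aᴴ = Y * (V * E * star V) := by
      rw [hAdef, hEdef]
      simp only [Matrix.conjTranspose_mul, Matrix.star_eq_conjTranspose,
        Matrix.conjTranspose_conjTranspose, Matrix.diagonal_conjTranspose, Matrix.mul_assoc]
      rw [hse]
    set f : n → ℂ := fun i => if μ i = 0 then 0 else 1 with hfdef
    have hAAH : A * Aᴴ = V * Matrix.diagonal f * star V := by
      rw [hAH, hAdef]
      have h4 : V * E * star V * Yᴴ * (Y * (V * E * star V))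
          = V * (E * (star V * (Yᴴ * Y * (V * (E * star V))))) := by
        simp only [Matrix.mul_assoc]
      rw [h4, hYY]
      simp only [Matrix.mul_assoc, hcancel]
      have hdiag : E * (D * (D * (E : Matrix n n ℂ))) = Matrix.diagonal f := by
        rw [hEdef, hDdef, Matrix.diagonal_mul_diagonal, Matrix.diagonal_mul_diagonal,
          Matrix.diagonal_mul_diagonal]
        refine congrArg Matrix.diagonal (funext fun i => ?_)
        by_cases h : μ i = 0
        · simp [hedef, hfdef, h]
        · have h' : ((μ i : ℂ)) ≠ 0 := by exact_mod_cast h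
          simp only [hedef, hfdef, if_neg h, Function.comp_apply]
          field_simp
          rfl
      rw [← hdiag]
      simp only [Matrix.mul_assoc]
    have hpsd : ((1 : Matrix n n ℂ) - A * Aᴴ).PosSemidef := by
      have h1f : (1 : Matrix n n ℂ) - V * Matrix.diagonal f * star V
          = V * Matrix.diagonal (fun i => 1 - f i) * star V := by
        rw [show Matrix.diagonal (fun i => 1 - f i) = 1 - Matrix.diagonal f by
          rw [← Matrix.diagonal_one, Matrix.diagonal_sub]]
        rw [Matrix.mul_sub, Matrix.sub_mul, Matrix.mul_one, hV1]
      rw [hAAH, h1f]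
      exact (Matrix.posSemidef_diagonal_iff.mpr (fun i => by
        by_cases h : μ i = 0 <;> simp [hfdef, h])).mul_mul_conjTranspose_same V
    rw [← opNorm_conjTranspose A, opNorm]
    apply ContinuousLinearMap.opNorm_le_bound _ zero_le_one
    intro x
    rw [one_mul]
    have hb2 : ‖(Matrix.toEuclideanCLM (𝕜 := ℂ) Aᴴ) x‖ ^ 2 ≤ ‖x‖ ^ 2 := by
      rw [norm_clm_sq Aᴴ x, Matrix.conjTranspose_conjTranspose]
      have hN := hpsd.dotProduct_mulVec_nonneg (x : n → ℂ)
      have hre : 0 ≤ (star (x : n → ℂ) ⬝ᵥ (((1 : Matrix n n ℂ) - A * Aᴴ) *ᵥ (x : n → ℂ))).re := by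
        rw [Complex.le_def] at hN
        simpa using hN.1
      rw [Matrix.sub_mulVec, Matrix.one_mulVec, dotProduct_sub, Complex.sub_re] at hre
      have := dot_self_re x
      linarith
    calc ‖(Matrix.toEuclideanCLM (𝕜 := ℂ) Aᴴ) x‖
        = Real.sqrt (‖(Matrix.toEuclideanCLM (𝕜 := ℂ) Aᴴ) x‖ ^ 2) :=
          (Real.sqrt_sq (norm_nonneg _)).symm
      _ ≤ Real.sqrt (‖x‖ ^ 2) := Real.sqrt_le_sqrt hb2
      _ = ‖x‖ := Real.sqrt_sq (norm_nonneg _)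
  · -- trace value
    have h1 : A * Y = V * (E * (star V * (Yᴴ * Y))) := by
      rw [hAdef]; simp only [Matrix.mul_assoc]
    have h2 : (A * Y).trace = (E * (D * (D * (star V * V)))).trace := by
      rw [h1, hYY, hcancel, Matrix.trace_mul_comm]
      simp only [Matrix.mul_assoc]
    rw [h2, hV2, Matrix.mul_one, hEdef, hDdef, Matrix.diagonal_mul_diagonal,
      Matrix.diagonal_mul_diagonal, Matrix.trace_diagonal, Complex.re_sum, htn]
    apply Finset.sum_congr rfl
    intro i _
    by_cases h : μ i = 0
    · simp [hedef, h]
    · have h' : ((μ i : ℂ)) ≠ 0 := by exact_mod_cast h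
      simp only [hedef, if_neg h, Function.comp_apply]
      rw [show ((μ i : ℂ))⁻¹ * ((RCLike.ofReal (μ i)) * (RCLike.ofReal (μ i))) = (μ i : ℂ) by
        show ((μ i : ℂ))⁻¹ * (((μ i : ℂ)) * ((μ i : ℂ))) = (μ i : ℂ); field_simp]
      exact Complex.ofReal_re _

end Aux

section Kron

set_option maxHeartbeats 1000000
set_option synthInstance.maxHeartbeats 1000000

open Matrix

/-- The Kronecker product of `A` with the identity on the bath. -/
private def kron1 {m b : Type*} [DecidableEq b] (A : Matrix m m ℂ) :
    Matrix (m × b) (m × b) ℂ :=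
  Matrix.of fun p q => A p.1 q.1 * (if p.2 = q.2 then 1 else 0)

variable {m b : Type*} [Fintype m] [DecidableEq m] [Fintype b] [DecidableEq b]

private lemma trace_kron1_mul (A : Matrix m m ℂ) (M : Matrix (m × b) (m × b) ℂ) :
    (kron1 (b := b) A * M).trace = (A * ptraceB M).trace := by
  simp only [Matrix.trace, Matrix.diag_apply, Matrix.mul_apply, kron1, ptraceB, Matrix.of_apply]
  simp only [Fintype.sum_prod_type]
  simp only [ite_mul, one_mul, zero_mul, mul_ite, mul_zero, mul_one]
  simp only [Finset.sum_ite_eq, Finset.mem_univ, if_true]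
  refine Finset.sum_congr rfl fun i _ => ?_
  rw [Finset.sum_comm]
  refine Finset.sum_congr rfl fun j _ => ?_
  rw [← Finset.mul_sum]

private lemma norm_sq_eq_sum (x : EuclideanSpace ℂ m) : ‖x‖ ^ 2 = ∑ i, ‖x i‖ ^ 2 := by
  rw [EuclideanSpace.norm_eq, Real.sq_sqrt]
  positivity

private lemma opNorm_kron1_le (A : Matrix m m ℂ) : opNorm (kron1 (b := b) A) ≤ opNorm A := by
  rw [opNorm]
  apply ContinuousLinearMap.opNorm_le_bound _ (norm_nonneg _)
  intro x
  set y : b → EuclideanSpace ℂ m := fun c => (WithLp.equiv 2 _).symm (fun j => x (j, c)) with hydef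
  have hKb : ∀ (i : m) (c : b), ((kron1 (b := b) A) *ᵥ (x : m × b → ℂ)) (i, c)
      = (A *ᵥ ((y c : m → ℂ))) i := by
    intro i c
    simp only [Matrix.mulVec, dotProduct, kron1, Matrix.of_apply, hydef]
    simp only [Fintype.sum_prod_type]
    simp only [ite_mul, one_mul, zero_mul, mul_ite, mul_zero]
    simp only [Finset.sum_ite_eq, Finset.mem_univ, if_true, mul_one]
    rfl
  have hsq : ‖(Matrix.toEuclideanCLM (𝕜 := ℂ) (kron1 (b := b) A)) x‖ ^ 2
      ≤ (opNorm A) ^ 2 * ‖x‖ ^ 2 := by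
    rw [norm_sq_eq_sum]
    have hx : ‖x‖ ^ 2 = ∑ c, ‖y c‖ ^ 2 := by
      rw [norm_sq_eq_sum x]
      rw [Fintype.sum_prod_type]
      rw [Finset.sum_comm]
      refine Finset.sum_congr rfl fun c _ => ?_
      rw [norm_sq_eq_sum (y c)]
      rfl
    rw [hx]
    calc ∑ p : m × b, ‖(Matrix.toEuclideanCLM (𝕜 := ℂ) (kron1 (b := b) A)) x p‖ ^ 2
        = ∑ c, ∑ i, ‖(A *ᵥ ((y c : m → ℂ))) i‖ ^ 2 := by
          rw [Fintype.sum_prod_type, Finset.sum_comm]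
          congr 1; funext c; congr 1; funext i
          rw [show (Matrix.toEuclideanCLM (𝕜 := ℂ) (kron1 (b := b) A)) x (i, c)
            = ((kron1 (b := b) A) *ᵥ (x : m × b → ℂ)) (i, c) from rfl, hKb]
      _ = ∑ c, ‖(Matrix.toEuclideanCLM (𝕜 := ℂ) A) (y c)‖ ^ 2 := by
          congr 1; funext c
          rw [norm_sq_eq_sum]
          rfl
      _ ≤ ∑ c, (opNorm A * ‖y c‖) ^ 2 := by
          apply Finset.sum_le_sum
          intro c _
          have h := (Matrix.toEuclideanCLM (𝕜 := ℂ) A).le_opNorm (y c)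
          have h0 : (0:ℝ) ≤ ‖(Matrix.toEuclideanCLM (𝕜 := ℂ) A) (y c)‖ := norm_nonneg _
          exact pow_le_pow_left₀ h0 h 2
      _ = (opNorm A) ^ 2 * ∑ c, ‖y c‖ ^ 2 := by
          rw [Finset.mul_sum]
          congr 1; funext c; ring
  have h1 : ‖(Matrix.toEuclideanCLM (𝕜 := ℂ) (kron1 (b := b) A)) x‖
      = Real.sqrt (‖(Matrix.toEuclideanCLM (𝕜 := ℂ) (kron1 (b := b) A)) x‖ ^ 2) :=
    (Real.sqrt_sq (norm_nonneg _)).symm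
  rw [h1]
  calc Real.sqrt (‖(Matrix.toEuclideanCLM (𝕜 := ℂ) (kron1 (b := b) A)) x‖ ^ 2)
      ≤ Real.sqrt ((opNorm A) ^ 2 * ‖x‖ ^ 2) := Real.sqrt_le_sqrt hsq
    _ = opNorm A * ‖x‖ := by
        rw [show (opNorm A) ^ 2 * ‖x‖ ^ 2 = (opNorm A * ‖x‖) ^ 2 by ring]
        exact Real.sqrt_sq (mul_nonneg (norm_nonneg _) (norm_nonneg _))

end Kron

/-- the trace distance does not increase under the partial
trace over the bath. -/
theorem traceNorm_ptraceB_sub_le {dS dB : ℕ}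
    (ρ σ : Matrix (Fin dS × Fin dB) (Fin dS × Fin dB) ℂ) :
    traceNorm (ptraceB ρ - ptraceB σ) ≤ traceNorm (ρ - σ) := by
  have hY : ptraceB ρ - ptraceB σ = ptraceB (ρ - σ) := by
    ext i j
    simp [ptraceB, Finset.sum_sub_distrib]
  obtain ⟨A, hA1, hA2⟩ := exists_dual (ptraceB ρ - ptraceB σ)
  rw [← hA2]
  have h3 : (A * (ptraceB ρ - ptraceB σ)).trace
      = (kron1 (b := Fin dB) A * (ρ - σ)).trace := by
    rw [hY, trace_kron1_mul]
  rw [h3]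
  calc ((kron1 (b := Fin dB) A * (ρ - σ)).trace).re
      ≤ opNorm (kron1 (b := Fin dB) A) * traceNorm (ρ - σ) := trace_re_le _ _
    _ ≤ 1 * traceNorm (ρ - σ) :=
        mul_le_mul_of_nonneg_right ((opNorm_kron1_le A).trans hA1) (traceNorm_nonneg _)
    _ = traceNorm (ρ - σ) := one_mul _

end
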